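/- For h > 0 let a₀(h) be the unique real number with 0 ≤ a₀(h) < π and a₀(h)·sin(a₀(h)/2) = hπ·cos(a₀(h)/2), and let a₂(h) be the unique real number with 2π ≤ a₂(h) < 3π and a₂(h)·sin(a₂(h)/2) = hπ·cos(a₂(h)/2). Define θ(h) = arctan(−cos(a₀(h)/2)/cos(a₂(h)/2)). Then (θ(h) − π/4)/h tends to −π/8 as h tends to 0 from the right; in particular θ(h) < π/4 for all sufficiently small h > 0. -/

import Mathlib

open Real

private lemma aux_sin_div : Filter.Tendsto (fun x : ℝ => Real.sin x / x)
    (nhdsWithin 0 {(0:ℝ)}ᶜ) (nhds 1) := by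
  have h := hasDerivAt_iff_tendsto_slope.mp (Real.hasDerivAt_sin 0)
  rw [Real.cos_zero] at h
  refine h.congr fun x => ?_
  rw [slope_def_field, Real.sin_zero, sub_zero, sub_zero]

private lemma aux_facts0 {h a : ℝ} (hh : 0 < h) (h0 : 0 ≤ a) (h1 : a < π)
    (heq : a * Real.sin (a / 2) = h * π * Real.cos (a / 2)) :
    0 < a ∧ 0 < Real.cos (a / 2) ∧ 0 < Real.sin (a / 2) ∧ a ^ 2 ≤ h * π ^ 2 ∧
      (h < 2 → h < a) := by
  have hπ := Real.pi_pos
  have hπ3 := Real.pi_gt_three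
  have hcos : 0 < Real.cos (a / 2) :=
    Real.cos_pos_of_mem_Ioo ⟨by linarith, by linarith⟩
  have hapos : 0 < a := by
    rcases h0.eq_or_lt with h' | h'
    · exfalso
      rw [← h'] at heq
      simp at heq
      rcases heq with h'' | h'' <;> linarith
    · exact h'
  have hsin : 0 < Real.sin (a / 2) :=
    Real.sin_pos_of_pos_of_lt_pi (by linarith) (by linarith)
  have hs2 : 2 / π * (a / 2) ≤ Real.sin (a / 2) :=
    Real.mul_le_sin (by linarith) (by linarith)
  have hcle : Real.cos (a / 2) ≤ 1 := Real.cos_le_one _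
  have hsq : a ^ 2 ≤ h * π ^ 2 := by
    have h2 : a * (2 / π * (a / 2)) ≤ a * Real.sin (a / 2) :=
      mul_le_mul_of_nonneg_left hs2 h0
    have h3 : h * π * Real.cos (a / 2) ≤ h * π :=
      mul_le_of_le_one_right (by positivity) hcle
    have h4 : a * (2 / π * (a / 2)) = a ^ 2 / π := by ring
    rw [h4] at h2
    rw [heq] at h2
    rw [div_le_iff₀ hπ] at h2
    nlinarith
  refine ⟨hapos, hcos, hsin, hsq, fun h2 => ?_⟩
  by_contra hcon
  push_neg at hcon
  -- a ≤ h < 2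
  have ha2 : a < 2 := lt_of_le_of_lt hcon h2
  have hsle : Real.sin (a / 2) ≤ a / 2 := Real.sin_le (by linarith)
  have hclb : 1 - (a / 2) ^ 2 / 2 ≤ Real.cos (a / 2) :=
    Real.one_sub_sq_div_two_le_cos
  have hch : (1:ℝ) / 2 ≤ Real.cos (a / 2) := by nlinarith
  have h5 : h * π * Real.cos (a / 2) ≤ a * (a / 2) := by
    rw [← heq]
    exact mul_le_mul_of_nonneg_left hsle hapos.le
  have h6 : h * π ≤ a ^ 2 := by nlinarith
  nlinarith

private lemma aux_facts2 {h b : ℝ} (hh : 0 < h) (hl : 2 * π ≤ b) (hu : b < 3 * π)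
    (heq : b * Real.sin (b / 2) = h * π * Real.cos (b / 2)) :
    0 < b - 2 * π ∧ b - 2 * π < π ∧ b - 2 * π ≤ h ∧
      Real.cos (b / 2) = -Real.cos ((b - 2 * π) / 2) ∧
      0 < Real.cos ((b - 2 * π) / 2) ∧
      (2 * π + (b - 2 * π)) * Real.sin ((b - 2 * π) / 2)
        = h * π * Real.cos ((b - 2 * π) / 2) := by
  have hπ := Real.pi_pos
  have heb : b / 2 = π + (b - 2 * π) / 2 := by ring
  have hsin : Real.sin (b / 2) = -Real.sin ((b - 2 * π) / 2) := by
    rw [heb, Real.sin_add]; simp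
  have hcos : Real.cos (b / 2) = -Real.cos ((b - 2 * π) / 2) := by
    rw [heb, Real.cos_add]; simp
  have he0 : 0 ≤ b - 2 * π := by linarith
  have he1 : b - 2 * π < π := by linarith
  have hcpos : 0 < Real.cos ((b - 2 * π) / 2) :=
    Real.cos_pos_of_mem_Ioo ⟨by linarith, by linarith⟩
  have heq' : (2 * π + (b - 2 * π)) * Real.sin ((b - 2 * π) / 2)
      = h * π * Real.cos ((b - 2 * π) / 2) := by
    rw [hsin, hcos] at heq
    have hb : b = 2 * π + (b - 2 * π) := by ring
    nlinarith [heq]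
  have hepos : 0 < b - 2 * π := by
    rcases he0.eq_or_lt with h' | h'
    · exfalso
      rw [← h'] at heq'
      simp at heq'
      rcases heq' with h'' | h'' <;> linarith
    · exact h'
  have hsinpos : 0 < Real.sin ((b - 2 * π) / 2) :=
    Real.sin_pos_of_pos_of_lt_pi (by linarith) (by linarith)
  have htan : (b - 2 * π) / 2 < Real.tan ((b - 2 * π) / 2) :=
    Real.lt_tan (by linarith) (by linarith)
  have hslb : (b - 2 * π) / 2 * Real.cos ((b - 2 * π) / 2)
      < Real.sin ((b - 2 * π) / 2) := by
    rw [Real.tan_eq_sin_div_cos, lt_div_iff₀ hcpos] at htan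
    linarith
  have heh : b - 2 * π ≤ h := by
    have hkey : (2 * π + (b - 2 * π)) * ((b - 2 * π) / 2 * Real.cos ((b - 2 * π) / 2))
        ≤ h * π * Real.cos ((b - 2 * π) / 2) := by
      rw [← heq']
      exact mul_le_mul_of_nonneg_left hslb.le (by positivity)
    have h2 : (2 * π + (b - 2 * π)) * ((b - 2 * π) / 2) ≤ h * π :=
      le_of_mul_le_mul_right (by nlinarith [hkey]) hcpos
    nlinarith
  exact ⟨hepos, he1, heh, hcos, hcpos, heq'⟩

theorem stmt_19 (a₀ a₂ : ℝ → ℝ)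
    (ha0 : ∀ h : ℝ, 0 < h → 0 ≤ a₀ h ∧ a₀ h < π ∧
      a₀ h * Real.sin (a₀ h / 2) = h * π * Real.cos (a₀ h / 2))
    (ha2 : ∀ h : ℝ, 0 < h → 2 * π ≤ a₂ h ∧ a₂ h < 3 * π ∧
      a₂ h * Real.sin (a₂ h / 2) = h * π * Real.cos (a₂ h / 2))
    (θ : ℝ → ℝ)
    (hθ : ∀ h : ℝ, θ h = Real.arctan (-(Real.cos (a₀ h / 2)) / Real.cos (a₂ h / 2))) :
    Filter.Tendsto (fun h : ℝ => (θ h - π / 4) / h)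
      (nhdsWithin 0 (Set.Ioi 0)) (nhds (-(π / 8))) ∧
    ∃ h₀ > (0 : ℝ), ∀ h : ℝ, 0 < h → h ≤ h₀ → θ h < π / 4 := by
  have hπ := Real.pi_pos
  have hπ3 := Real.pi_gt_three
  have hmem : Set.Ioo (0:ℝ) 2 ∈ nhdsWithin (0:ℝ) (Set.Ioi 0) :=
    Ioo_mem_nhdsGT_of_mem ⟨le_refl 0, by norm_num⟩
  -- basic per-h facts
  have F0 : ∀ h : ℝ, 0 < h → 0 < a₀ h ∧ 0 < Real.cos (a₀ h / 2) ∧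
      0 < Real.sin (a₀ h / 2) ∧ (a₀ h) ^ 2 ≤ h * π ^ 2 ∧ (h < 2 → h < a₀ h) :=
    fun h hh => aux_facts0 hh (ha0 h hh).1 (ha0 h hh).2.1 (ha0 h hh).2.2
  have F2 : ∀ h : ℝ, 0 < h → 0 < a₂ h - 2 * π ∧ a₂ h - 2 * π < π ∧
      a₂ h - 2 * π ≤ h ∧
      Real.cos (a₂ h / 2) = -Real.cos ((a₂ h - 2 * π) / 2) ∧
      0 < Real.cos ((a₂ h - 2 * π) / 2) ∧
      (2 * π + (a₂ h - 2 * π)) * Real.sin ((a₂ h - 2 * π) / 2)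
        = h * π * Real.cos ((a₂ h - 2 * π) / 2) :=
    fun h hh => aux_facts2 hh (ha2 h hh).1 (ha2 h hh).2.1 (ha2 h hh).2.2
  -- r h = cos(a₀ h/2)/cos(e h/2)
  have hr : ∀ h : ℝ, 0 < h →
      -(Real.cos (a₀ h / 2)) / Real.cos (a₂ h / 2)
        = Real.cos (a₀ h / 2) / Real.cos ((a₂ h - 2 * π) / 2) := by
    intro h hh
    rw [(F2 h hh).2.2.2.1, neg_div_neg_eq]
  -- r h < 1 for 0 < h < 2
  have hrlt : ∀ h : ℝ, 0 < h → h < 2 →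
      -(Real.cos (a₀ h / 2)) / Real.cos (a₂ h / 2) < 1 := by
    intro h hh h2
    obtain ⟨ha, hc0, -, -, hha⟩ := F0 h hh
    obtain ⟨he0, he1, heh, -, hce, -⟩ := F2 h hh
    have hlt := (ha0 h hh).2.1
    have hea : a₂ h - 2 * π < a₀ h := lt_of_le_of_lt heh (hha h2)
    have hcc : Real.cos (a₀ h / 2) < Real.cos ((a₂ h - 2 * π) / 2) :=
      Real.cos_lt_cos_of_nonneg_of_le_pi (by linarith) (by linarith) (by linarith)
    rw [hr h hh, div_lt_one hce]
    exact hcc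
  -- a₀ tends to 0 within Ioi 0
  have Ta0 : Filter.Tendsto a₀ (nhdsWithin 0 (Set.Ioi 0)) (nhds 0) := by
    apply squeeze_zero' (t₀ := nhdsWithin 0 (Set.Ioi 0))
      (g := fun h => Real.sqrt (h * π ^ 2))
    · filter_upwards [self_mem_nhdsWithin] with h hh
      exact (F0 h hh).1.le
    · filter_upwards [self_mem_nhdsWithin] with h hh
      have hh' : (0:ℝ) < h := hh
      calc a₀ h = Real.sqrt ((a₀ h) ^ 2) := (Real.sqrt_sq (F0 h hh).1.le).symm
        _ ≤ Real.sqrt (h * π ^ 2) := Real.sqrt_le_sqrt (F0 h hh).2.2.2.1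
    · have hc : Continuous fun h : ℝ => Real.sqrt (h * π ^ 2) :=
        Real.continuous_sqrt.comp (continuous_id.mul continuous_const)
      have := hc.tendsto' 0 0 (by simp)
      exact this.mono_left nhdsWithin_le_nhds
  have Ta0' : Filter.Tendsto a₀ (nhdsWithin 0 (Set.Ioi 0))
      (nhdsWithin 0 (Set.Ioi 0)) := by
    rw [tendsto_nhdsWithin_iff]
    refine ⟨Ta0, ?_⟩
    filter_upwards [self_mem_nhdsWithin] with h hh
    exact (F0 h hh).1
  -- e tends to 0
  have Te : Filter.Tendsto (fun h => a₂ h - 2 * π)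
      (nhdsWithin 0 (Set.Ioi 0)) (nhds 0) := by
    apply squeeze_zero' (t₀ := nhdsWithin 0 (Set.Ioi 0)) (g := fun h => h)
    · filter_upwards [self_mem_nhdsWithin] with h hh
      exact (F2 h hh).1.le
    · filter_upwards [self_mem_nhdsWithin] with h hh
      exact (F2 h hh).2.2.1
    · exact Filter.tendsto_id.mono_left nhdsWithin_le_nhds
  -- cos limits
  have C1 : Filter.Tendsto (fun h => Real.cos (a₀ h / 2))
      (nhdsWithin 0 (Set.Ioi 0)) (nhds 1) := by
    have hd : Filter.Tendsto (fun h => a₀ h / 2) (nhdsWithin 0 (Set.Ioi 0))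
        (nhds 0) := by simpa using Ta0.div_const 2
    have hc := (Real.continuous_cos.tendsto' 0 1 (by simp)).comp hd
    exact hc
  have C2 : Filter.Tendsto (fun h => Real.cos ((a₂ h - 2 * π) / 2))
      (nhdsWithin 0 (Set.Ioi 0)) (nhds 1) := by
    have hd : Filter.Tendsto (fun h => (a₂ h - 2 * π) / 2) (nhdsWithin 0 (Set.Ioi 0))
        (nhds 0) := by simpa using Te.div_const 2
    have hc := (Real.continuous_cos.tendsto' 0 1 (by simp)).comp hd
    exact hc
  -- L1 : (1 - cos(a₀ h/2))/h → π/4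
  have TG : Filter.Tendsto
      (fun a : ℝ => π * Real.cos (a / 2) * Real.sin (a / 4) / (a * Real.cos (a / 4)))
      (nhdsWithin 0 (Set.Ioi 0)) (nhds (π / 4)) := by
    have hnum : Filter.Tendsto (fun a : ℝ => Real.sin (a / 4) / (a / 4))
        (nhdsWithin 0 (Set.Ioi 0)) (nhds 1) := by
      have hmap : Filter.Tendsto (fun a : ℝ => a / 4)
          (nhdsWithin 0 (Set.Ioi 0)) (nhdsWithin 0 {(0:ℝ)}ᶜ) := by
        rw [tendsto_nhdsWithin_iff]
        constructor
        · have : Filter.Tendsto (fun a : ℝ => a / 4) (nhds 0) (nhds 0) := by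
            simpa using (continuous_id.div_const (4:ℝ)).tendsto' 0 0 (by norm_num)
          exact this.mono_left nhdsWithin_le_nhds
        · filter_upwards [self_mem_nhdsWithin] with a ha
          have ha' : (0:ℝ) < a := ha
          simp only [Set.mem_compl_iff, Set.mem_singleton_iff]
          positivity
      exact aux_sin_div.comp hmap
    have hcos2 : Filter.Tendsto (fun a : ℝ => Real.cos (a / 2))
        (nhdsWithin 0 (Set.Ioi 0)) (nhds 1) := by
      have hc : Continuous fun a : ℝ => Real.cos (a / 2) :=
        Real.continuous_cos.comp (continuous_id.div_const 2)
      exact (hc.tendsto' 0 1 (by simp)).mono_left nhdsWithin_le_nhds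
    have hcos4 : Filter.Tendsto (fun a : ℝ => Real.cos (a / 4))
        (nhdsWithin 0 (Set.Ioi 0)) (nhds 1) := by
      have hc : Continuous fun a : ℝ => Real.cos (a / 4) :=
        Real.continuous_cos.comp (continuous_id.div_const 4)
      exact (hc.tendsto' 0 1 (by simp)).mono_left nhdsWithin_le_nhds
    have base : Filter.Tendsto
        (fun a : ℝ => π * Real.cos (a / 2) * (Real.sin (a / 4) / (a / 4) / 4)
          / Real.cos (a / 4))
        (nhdsWithin 0 (Set.Ioi 0)) (nhds (π * 1 * (1 / 4) / 1)) :=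
      ((tendsto_const_nhds.mul hcos2).mul (hnum.div_const 4)).div hcos4 one_ne_zero
    have hval : π * 1 * ((1:ℝ) / 4) / 1 = π / 4 := by ring
    rw [hval] at base
    refine base.congr' ?_
    filter_upwards [hmem] with a ha
    obtain ⟨ha0', ha2'⟩ := ha
    have hc4 : 0 < Real.cos (a / 4) :=
      Real.cos_pos_of_mem_Ioo ⟨by linarith, by linarith⟩
    have hane : a ≠ 0 := ha0'.ne'
    have hc4ne : Real.cos (a / 4) ≠ 0 := hc4.ne'
    field_simp
  have L1 : Filter.Tendsto (fun h : ℝ => (1 - Real.cos (a₀ h / 2)) / h)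
      (nhdsWithin 0 (Set.Ioi 0)) (nhds (π / 4)) := by
    refine (TG.comp Ta0').congr' ?_
    filter_upwards [self_mem_nhdsWithin] with h hh
    have hh' : (0:ℝ) < h := hh
    obtain ⟨ha, hc2, hs2, -, -⟩ := F0 h hh
    have hlt := (ha0 h hh').2.1
    have heq := (ha0 h hh').2.2
    have hs4 : 0 < Real.sin (a₀ h / 4) :=
      Real.sin_pos_of_pos_of_lt_pi (by linarith) (by linarith)
    have hc4 : 0 < Real.cos (a₀ h / 4) :=
      Real.cos_pos_of_mem_Ioo ⟨by linarith, by linarith⟩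
    show π * Real.cos (a₀ h / 2) * Real.sin (a₀ h / 4) / (a₀ h * Real.cos (a₀ h / 4))
      = (1 - Real.cos (a₀ h / 2)) / h
    have hdouble : Real.sin (a₀ h / 2)
        = 2 * Real.sin (a₀ h / 4) * Real.cos (a₀ h / 4) := by
      rw [show a₀ h / 2 = 2 * (a₀ h / 4) by ring, Real.sin_two_mul]
    have hhalf : Real.cos (a₀ h / 2) = 1 - 2 * Real.sin (a₀ h / 4) ^ 2 := by
      have hsq := Real.sin_sq_eq_half_sub (a₀ h / 4)
      rw [show 2 * (a₀ h / 4) = a₀ h / 2 by ring] at hsq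
      linarith
    have heq2 : a₀ h * (2 * Real.sin (a₀ h / 4) * Real.cos (a₀ h / 4))
        = h * π * (1 - 2 * Real.sin (a₀ h / 4) ^ 2) := by
      rw [← hdouble, ← hhalf]; exact heq
    rw [div_eq_div_iff
      (by positivity : a₀ h * Real.cos (a₀ h / 4) ≠ 0) hh'.ne', hhalf]
    linear_combination (-Real.sin (a₀ h / 4)) * heq2
  -- L2 : (1 - cos(e h/2))/h → 0
  have L2 : Filter.Tendsto (fun h : ℝ => (1 - Real.cos ((a₂ h - 2 * π) / 2)) / h)
      (nhdsWithin 0 (Set.Ioi 0)) (nhds 0) := by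
    apply squeeze_zero' (t₀ := nhdsWithin 0 (Set.Ioi 0)) (g := fun h => h / 8)
    · filter_upwards [self_mem_nhdsWithin] with h hh
      have hh' : (0:ℝ) < h := hh
      have hc := Real.cos_le_one ((a₂ h - 2 * π) / 2)
      have : (0:ℝ) ≤ 1 - Real.cos ((a₂ h - 2 * π) / 2) := by linarith
      positivity
    · filter_upwards [self_mem_nhdsWithin] with h hh
      have hh' : (0:ℝ) < h := hh
      obtain ⟨he0, he1, heh, -, -, -⟩ := F2 h hh
      have hs4 : Real.sin ((a₂ h - 2 * π) / 4) ≤ (a₂ h - 2 * π) / 4 :=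
        Real.sin_le (by linarith)
      have hs4' : 0 ≤ Real.sin ((a₂ h - 2 * π) / 4) :=
        Real.sin_nonneg_of_nonneg_of_le_pi (by linarith) (by linarith)
      have hhalf : 1 - Real.cos ((a₂ h - 2 * π) / 2)
          = 2 * Real.sin ((a₂ h - 2 * π) / 4) ^ 2 := by
        have hsq := Real.sin_sq_eq_half_sub ((a₂ h - 2 * π) / 4)
        rw [show 2 * ((a₂ h - 2 * π) / 4) = (a₂ h - 2 * π) / 2 by ring] at hsq
        linarith
      rw [div_le_div_iff₀ hh' (by norm_num : (0:ℝ) < 8), hhalf]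
      nlinarith
    · have : Filter.Tendsto (fun h : ℝ => h / 8) (nhdsWithin 0 (Set.Ioi 0))
          (nhds 0) := by
        simpa using (Filter.tendsto_id.mono_left
          (nhdsWithin_le_nhds : nhdsWithin (0:ℝ) (Set.Ioi 0) ≤ nhds 0)).div_const 8
      exact this
  -- Tr1 : r → 1
  have Tr1 : Filter.Tendsto (fun h => -(Real.cos (a₀ h / 2)) / Real.cos (a₂ h / 2))
      (nhdsWithin 0 (Set.Ioi 0)) (nhds 1) := by
    have hq : Filter.Tendsto
        (fun h => Real.cos (a₀ h / 2) / Real.cos ((a₂ h - 2 * π) / 2))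
        (nhdsWithin 0 (Set.Ioi 0)) (nhds (1 / 1)) := C1.div C2 one_ne_zero
    rw [div_one] at hq
    refine hq.congr' ?_
    filter_upwards [self_mem_nhdsWithin] with h hh
    exact (hr h hh).symm
  -- Tdiff : (r h - 1)/h → -(π/4)
  have Tdiff : Filter.Tendsto
      (fun h : ℝ => (-(Real.cos (a₀ h / 2)) / Real.cos (a₂ h / 2) - 1) / h)
      (nhdsWithin 0 (Set.Ioi 0)) (nhds (-(π / 4))) := by
    have base : Filter.Tendsto
        (fun h : ℝ => ((1 - Real.cos ((a₂ h - 2 * π) / 2)) / h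
          - (1 - Real.cos (a₀ h / 2)) / h) / Real.cos ((a₂ h - 2 * π) / 2))
        (nhdsWithin 0 (Set.Ioi 0)) (nhds ((0 - π / 4) / 1)) :=
      (L2.sub L1).div C2 one_ne_zero
    have hval : ((0:ℝ) - π / 4) / 1 = -(π / 4) := by ring
    rw [hval] at base
    refine base.congr' ?_
    filter_upwards [self_mem_nhdsWithin] with h hh
    have hh' : (0:ℝ) < h := hh
    have hce := (F2 h hh').2.2.2.2.1
    have key : (1 - Real.cos ((a₂ h - 2 * π) / 2)) / h
        - (1 - Real.cos (a₀ h / 2)) / h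
        = (Real.cos (a₀ h / 2) - Real.cos ((a₂ h - 2 * π) / 2)) / h := by ring
    rw [hr h hh', key, div_sub_one hce.ne', div_div, div_div]
    ring
  -- slope limit
  have Tr1' : Filter.Tendsto (fun h => -(Real.cos (a₀ h / 2)) / Real.cos (a₂ h / 2))
      (nhdsWithin 0 (Set.Ioi 0)) (nhdsWithin 1 {(1:ℝ)}ᶜ) := by
    rw [tendsto_nhdsWithin_iff]
    refine ⟨Tr1, ?_⟩
    filter_upwards [hmem] with h hh
    simp only [Set.mem_compl_iff, Set.mem_singleton_iff]
    exact (hrlt h hh.1 hh.2).ne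
  have Tslope : Filter.Tendsto
      (fun h => slope Real.arctan 1 (-(Real.cos (a₀ h / 2)) / Real.cos (a₂ h / 2)))
      (nhdsWithin 0 (Set.Ioi 0)) (nhds (1 / 2)) := by
    have hd := hasDerivAt_iff_tendsto_slope.mp (Real.hasDerivAt_arctan 1)
    have hval : 1 / (1 + (1:ℝ) ^ 2) = 1 / 2 := by norm_num
    rw [hval] at hd
    exact hd.comp Tr1'
  -- main limit
  have Tmain : Filter.Tendsto (fun h : ℝ => (θ h - π / 4) / h)
      (nhdsWithin 0 (Set.Ioi 0)) (nhds (-(π / 8))) := by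
    have base : Filter.Tendsto
        (fun h : ℝ => slope Real.arctan 1 (-(Real.cos (a₀ h / 2)) / Real.cos (a₂ h / 2))
          * ((-(Real.cos (a₀ h / 2)) / Real.cos (a₂ h / 2) - 1) / h))
        (nhdsWithin 0 (Set.Ioi 0)) (nhds (1 / 2 * -(π / 4))) := Tslope.mul Tdiff
    have hval : (1:ℝ) / 2 * -(π / 4) = -(π / 8) := by ring
    rw [hval] at base
    refine base.congr' ?_
    filter_upwards [hmem] with h hh
    have hh' : (0:ℝ) < h := hh.1
    have hne : -(Real.cos (a₀ h / 2)) / Real.cos (a₂ h / 2) - 1 ≠ 0 :=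
      sub_ne_zero.mpr (hrlt h hh.1 hh.2).ne
    rw [slope_def_field, Real.arctan_one, hθ h]
    rw [div_mul_div_comm, mul_comm (_ - 1) h, mul_div_mul_right _ _ hne]
  refine ⟨Tmain, 1, one_pos, fun h hh h1 => ?_⟩
  have h2 : h < 2 := by linarith
  have hlt := hrlt h hh h2
  rw [hθ h, ← Real.arctan_one]
  exact Real.arctan_strictMono hlt
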